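/- Let g be a symmetric invertible 4×4 real matrix with inverse entries g^{αβ}, and ϱ := √|det g| ≠ 0. Let f : Fin 4 → Fin 4 → Fin 4 → ℝ satisfy, for all α, β, γ: f^α_{βγ} + f^α_{γβ} = δ^α_γ Σ_r f^r_{rβ} + δ^α_β Σ_r f^r_{rγ} + (Σ_{r,s} f^α_{rs} g^{rs} - Σ_{r,s} f^r_{rs} g^{αs}) g_{βγ}. Define C_γ := Σ_ν f^ν_{νγ} and K^α_{βγ} := f^α_{βγ} - C_β δ^α_γ. Then Σ_α K^α_{αγ} = 0 for all γ, and K^α_{βγ} + K^α_{γβ} = 0 for all α, β, γ; that is, every solution decomposes as a trace solution plus an antisymmetric (torsion) solution. -/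
import Mathlib


theorem stmt_12 (g : Matrix (Fin 4) (Fin 4) ℝ) (hg : g.IsSymm) (hdet : g.det ≠ 0)
    (ϱ : ℝ) (hϱ : ϱ = Real.sqrt |g.det|) (hϱ0 : ϱ ≠ 0)
    (f : Fin 4 → Fin 4 → Fin 4 → ℝ)
    (hf : ∀ α β γ, f α β γ + f α γ β
      = (if α = γ then (1:ℝ) else 0) * (∑ r, f r r β)
      + (if α = β then (1:ℝ) else 0) * (∑ r, f r r γ)
      + ((∑ r, ∑ s, f α r s * g⁻¹ r s) - (∑ r, ∑ s, f r r s * g⁻¹ α s)) * g β γ)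
    (C : Fin 4 → ℝ) (hC : ∀ γ, C γ = ∑ ν, f ν ν γ)
    (K : Fin 4 → Fin 4 → Fin 4 → ℝ)
    (hK : ∀ α β γ, K α β γ = f α β γ - C β * (if α = γ then (1:ℝ) else 0)) :
    (∀ γ, ∑ α, K α α γ = 0) ∧ (∀ α β γ, K α β γ + K α γ β = 0) := by
  have hdetU : IsUnit g.det := isUnit_iff_ne_zero.mpr hdet
  have hmul : g * g⁻¹ = 1 := Matrix.mul_nonsing_inv g hdetU
  have hinvT : Matrix.transpose g⁻¹ = g⁻¹ := by
    rw [Matrix.transpose_nonsing_inv, hg.eq]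
  have hsymInv : ∀ i j, g⁻¹ i j = g⁻¹ j i := by
    intro i j
    have h := congrFun (congrFun hinvT i) j
    rw [Matrix.transpose_apply] at h
    exact h.symm
  have htr : ∑ β : Fin 4, ∑ γ : Fin 4, g β γ * g⁻¹ β γ = 4 := by
    have h1 : ∀ β : Fin 4, ∑ γ : Fin 4, g β γ * g⁻¹ β γ = 1 := by
      intro β
      have h2 := congrFun (congrFun hmul β) β
      rw [Matrix.mul_apply] at h2
      simp only [Matrix.one_apply_eq] at h2
      rw [← h2]
      exact Finset.sum_congr rfl fun γ _ => by rw [hsymInv γ β]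
    simp [h1]
  have key : ∀ α, (∑ r, ∑ s, f α r s * g⁻¹ r s) = (∑ r, ∑ s, f r r s * g⁻¹ α s) := by
    intro α
    set A : ℝ := ∑ r, ∑ s, f α r s * g⁻¹ r s with hA
    set B : ℝ := ∑ r, ∑ s, f r r s * g⁻¹ α s with hB
    have hcon : ∑ β : Fin 4, ∑ γ : Fin 4, (f α β γ + f α γ β) * g⁻¹ β γ
        = ∑ β : Fin 4, ∑ γ : Fin 4,
          ((if α = γ then (1:ℝ) else 0) * (∑ r, f r r β)
          + (if α = β then (1:ℝ) else 0) * (∑ r, f r r γ)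
          + (A - B) * g β γ) * g⁻¹ β γ :=
      Finset.sum_congr rfl fun β _ => Finset.sum_congr rfl fun γ _ => by rw [hf]
    have hL : ∑ β : Fin 4, ∑ γ : Fin 4, (f α β γ + f α γ β) * g⁻¹ β γ = A + A := by
      have e1 : ∀ β γ : Fin 4, (f α β γ + f α γ β) * g⁻¹ β γ
          = f α β γ * g⁻¹ β γ + f α γ β * g⁻¹ β γ := fun β γ => by ring
      simp only [e1, Finset.sum_add_distrib]
      have e2 : ∑ β : Fin 4, ∑ γ : Fin 4, f α γ β * g⁻¹ β γ = A := by
        rw [Finset.sum_comm]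
        exact Finset.sum_congr rfl fun r _ => Finset.sum_congr rfl fun s _ => by
          rw [hsymInv s r]
      rw [e2, hA]
    have hR : ∑ β : Fin 4, ∑ γ : Fin 4,
          ((if α = γ then (1:ℝ) else 0) * (∑ r, f r r β)
          + (if α = β then (1:ℝ) else 0) * (∑ r, f r r γ)
          + (A - B) * g β γ) * g⁻¹ β γ
        = B + B + (A - B) * 4 := by
      have e1 : ∀ β γ : Fin 4,
          ((if α = γ then (1:ℝ) else 0) * (∑ r, f r r β)
          + (if α = β then (1:ℝ) else 0) * (∑ r, f r r γ)
          + (A - B) * g β γ) * g⁻¹ β γ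
          = (if α = γ then (∑ r, f r r β) * g⁻¹ β γ else 0)
          + (if α = β then (∑ r, f r r γ) * g⁻¹ β γ else 0)
          + (A - B) * (g β γ * g⁻¹ β γ) := by
        intro β γ
        split_ifs <;> ring
      simp only [e1, Finset.sum_add_distrib]
      have t1 : ∑ β : Fin 4, ∑ γ : Fin 4,
          (if α = γ then (∑ r, f r r β) * g⁻¹ β γ else 0) = B := by
        simp only [Finset.sum_ite_eq, Finset.mem_univ, if_true]
        have hB' : B = ∑ s : Fin 4, ∑ r : Fin 4, f r r s * g⁻¹ α s := Finset.sum_comm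
        rw [hB']
        exact Finset.sum_congr rfl fun β _ => by rw [hsymInv β α, Finset.sum_mul]
      have t2 : ∑ β : Fin 4, ∑ γ : Fin 4,
          (if α = β then (∑ r, f r r γ) * g⁻¹ β γ else 0) = B := by
        have : ∀ β : Fin 4, ∑ γ : Fin 4,
            (if α = β then (∑ r, f r r γ) * g⁻¹ β γ else 0)
            = if α = β then ∑ γ : Fin 4, (∑ r, f r r γ) * g⁻¹ β γ else 0 := by
          intro β
          by_cases h : α = β <;> simp [h]
        simp only [this, Finset.sum_ite_eq, Finset.mem_univ, if_true]
        have hB' : B = ∑ s : Fin 4, ∑ r : Fin 4, f r r s * g⁻¹ α s := Finset.sum_comm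
        rw [hB']
        exact Finset.sum_congr rfl fun γ _ => Finset.sum_mul _ _ _
      have t3 : ∑ β : Fin 4, ∑ γ : Fin 4, (A - B) * (g β γ * g⁻¹ β γ)
          = (A - B) * 4 := by
        simp only [← Finset.mul_sum]
        rw [htr]
      rw [t1, t2, t3]
    rw [hL, hR] at hcon
    linarith
  constructor
  · intro γ
    simp only [hK]
    rw [Finset.sum_sub_distrib]
    have h1 : ∑ α : Fin 4, f α α γ = C γ := (hC γ).symm
    have h2 : ∑ α : Fin 4, C α * (if α = γ then (1:ℝ) else 0) = C γ := by
      simp [mul_ite]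
    rw [h1, h2, sub_self]
  · intro α β γ
    have h := hf α β γ
    rw [key α, sub_self, zero_mul, add_zero] at h
    simp only [hK, hC]
    linear_combination h
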